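/- With notation as in the Corrugation Process, if γ satisfies the Average Constraint ∂_j f₀(x) = ∫₀¹ γ(x,t) dt for all x, then for all x ∈ [0,1]^m, ‖∂_j f₁(x) − γ(x, N x_j)‖ ≤ (2‖∂_j γ‖_∞)/N. -/

import Mathlib

open MeasureTheory intervalIntegral

section Aux

variable {m : ℕ} {E : Type*} [NormedAddCommGroup E] [NormedSpace ℝ E]

lemma corr_line_hasDerivAt (e y : Fin m → ℝ) (t : ℝ) :
    HasDerivAt (fun t : ℝ => y + t • e) e t := by
  simpa using ((hasDerivAt_id t).smul_const e).const_add y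

lemma corr_dline (γ : (Fin m → ℝ) → ℝ → E) (hγdiff : ∀ s, Differentiable ℝ fun x => γ x s)
    (e y : Fin m → ℝ) (s t : ℝ) :
    HasDerivAt (fun t : ℝ => γ (y + t • e) s) (fderiv ℝ (fun x => γ x s) (y + t • e) e) t :=
  by have := ((hγdiff s (y + t • e)).hasFDerivAt).comp_hasDerivAt t (corr_line_hasDerivAt e y t); exact this

lemma corr_d_meas (γ : (Fin m → ℝ) → ℝ → E)
    (hγ : Continuous fun p : (Fin m → ℝ) × ℝ => γ p.1 p.2)
    (hγdiff : ∀ s, Differentiable ℝ fun x => γ x s) (e y : Fin m → ℝ) :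
    AEStronglyMeasurable (fun s => fderiv ℝ (fun x => γ x s) y e) (volume : Measure ℝ) := by
  have hγc : ∀ z : Fin m → ℝ, Continuous fun s => γ z s := fun z =>
    hγ.comp (Continuous.prodMk_right z)
  apply aestronglyMeasurable_of_tendsto_ae (Filter.atTop : Filter ℕ)
    (f := fun (k : ℕ) (s : ℝ) => ((k : ℝ) + 1) • (γ (y + ((k : ℝ) + 1)⁻¹ • e) s - γ y s))
  · intro k
    exact (((hγc _).sub (hγc _)).const_smul _).aestronglyMeasurable
  · refine .of_forall fun s => ?_
    have h1 : HasDerivAt (fun t : ℝ => γ (y + t • e) s)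
        (fderiv ℝ (fun x => γ x s) y e) 0 := by
      have := corr_dline γ hγdiff e y s 0
      simpa using this
    have h2 := hasDerivAt_iff_tendsto_slope.mp h1
    have hseq : Filter.Tendsto (fun k : ℕ => ((k : ℝ) + 1)⁻¹) Filter.atTop (nhdsWithin 0 {(0:ℝ)}ᶜ) := by
      rw [tendsto_nhdsWithin_iff]
      constructor
      · simpa [one_div] using tendsto_one_div_add_atTop_nhds_zero_nat (𝕜 := ℝ)
      · refine .of_forall fun k => ?_
        have : (0:ℝ) < ((k : ℝ) + 1)⁻¹ := by positivity
        simpa using this.ne'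
    refine (h2.comp hseq).congr fun k => ?_
    have hk : ((k : ℝ) + 1)⁻¹ ≠ 0 := by positivity
    simp only [Function.comp, slope_def_module, sub_zero, inv_inv]
    simp

end Aux

/-- Corrugation Process: if the Average Constraint holds, then
`‖∂ⱼ f₁(x) − γ(x, N xⱼ)‖ ≤ 2‖∂ⱼ γ‖_∞ / N`. -/
theorem corrugation_process_main_derivative {m n : ℕ}
    (f₀ : (Fin m → ℝ) → EuclideanSpace ℝ (Fin n))
    (hf₀ : ContDiff ℝ 2 f₀)
    (γ : (Fin m → ℝ) → ℝ → EuclideanSpace ℝ (Fin n))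
    (hγ : Continuous fun p : (Fin m → ℝ) × ℝ => γ p.1 p.2)
    (hγdiff : ∀ s, Differentiable ℝ fun x => γ x s)
    (hper : ∀ x s, γ x (s + 1) = γ x s)
    (j : Fin m)
    (hAC : ∀ x, fderiv ℝ f₀ x (Pi.single j 1 : Fin m → ℝ) = ∫ t in (0:ℝ)..1, γ x t)
    (C : ℝ)
    (hC : ∀ x s, ‖fderiv ℝ (fun y => γ y s) x (Pi.single j 1 : Fin m → ℝ)‖ ≤ C)
    (N : ℝ) (hN : 0 < N)
    (f₁ : (Fin m → ℝ) → EuclideanSpace ℝ (Fin n))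
    (hf₁ : ∀ x, f₁ x = f₀ x + (1 / N) •
      ∫ s in (0:ℝ)..(N * x j), (γ x s - ∫ u in (0:ℝ)..1, γ x u))
    (hf₁diff : Differentiable ℝ f₁) :
    ∀ x, ‖fderiv ℝ f₁ x (Pi.single j 1 : Fin m → ℝ) - γ x (N * x j)‖ ≤ 2 * C / N := by
  intro x₀
  set e : Fin m → ℝ := Pi.single j 1 with he
  set c : ℝ := N * x₀ j with hc
  set d : (Fin m → ℝ) → ℝ → EuclideanSpace ℝ (Fin n) :=
    fun y s => fderiv ℝ (fun x => γ x s) y e with hd_def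
  have hγc : ∀ z : Fin m → ℝ, Continuous fun s => γ z s := fun z =>
    hγ.comp (Continuous.prodMk_right z)
  have hC' : ∀ y s, ‖d y s‖ ≤ C := fun y s => hC y s
  have hC0 : 0 ≤ C := le_trans (norm_nonneg _) (hC 0 0)
  have hzero : x₀ + (0:ℝ) • e = x₀ := by simp
  have hd_meas : ∀ y, AEStronglyMeasurable (d y) (volume : Measure ℝ) := fun y =>
    corr_d_meas γ hγ hγdiff e y
  have hd_int : ∀ (y) (a b : ℝ), IntervalIntegrable (d y) volume a b := by
    intro y a b
    rw [intervalIntegrable_iff]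
    exact (integrableOn_const measure_Ioc_lt_top.ne).mono'
      ((hd_meas y).restrict) (ae_of_all _ fun s => hC' y s)
  have hdbar_norm : ∀ y, ‖∫ u in (0:ℝ)..1, d y u‖ ≤ C := by
    intro y
    have := intervalIntegral.norm_integral_le_of_norm_le_const
      (C := C) (a := (0:ℝ)) (b := 1) (f := d y) (fun s _ => hC' y s)
    simpa using this
  have hlipγ : ∀ (y : Fin m → ℝ) (s t : ℝ), ‖γ (y + t • e) s - γ y s‖ ≤ C * |t| := by
    intro y s t
    have := Convex.norm_image_sub_le_of_norm_hasDerivWithin_le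
      (f := fun t : ℝ => γ (y + t • e) s) (f' := fun u => d (y + u • e) s) (C := C)
      (s := Set.univ)
      (fun u _ => (corr_dline γ hγdiff e y s u).hasDerivWithinAt)
      (fun u _ => hC' _ _) convex_univ (Set.mem_univ 0) (Set.mem_univ t)
    simpa [Real.norm_eq_abs] using this
  have hlipgb : ∀ t : ℝ, ‖(∫ u in (0:ℝ)..1, γ (x₀ + t • e) u) - ∫ u in (0:ℝ)..1, γ x₀ u‖
      ≤ C * |t| := by
    intro t
    rw [← intervalIntegral.integral_sub ((hγc _).intervalIntegrable 0 1)
      ((hγc _).intervalIntegrable 0 1)]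
    have := intervalIntegral.norm_integral_le_of_norm_le_const (C := C * |t|)
      (a := (0:ℝ)) (b := 1) (f := fun u => γ (x₀ + t • e) u - γ x₀ u)
      (fun u _ => hlipγ x₀ u t)
    simpa using this
  -- parametric differentiation with fixed limits
  have key : ∀ (c' : ℝ) (t₀ : ℝ),
      HasDerivAt (fun t : ℝ => ∫ s in (0:ℝ)..c', γ (x₀ + t • e) s)
        (∫ s in (0:ℝ)..c', d (x₀ + t₀ • e) s) t₀ := by
    intro c' t₀
    have := intervalIntegral.hasDerivAt_integral_of_dominated_loc_of_deriv_le
      (μ := volume) (F := fun (t : ℝ) (s : ℝ) => γ (x₀ + t • e) s)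
      (F' := fun (t : ℝ) (s : ℝ) => d (x₀ + t • e) s) (x₀ := t₀)
      (a := 0) (b := c') (bound := fun _ => C) (s := Set.univ) Filter.univ_mem
      (.of_forall fun t => ((hγc _)).aestronglyMeasurable.restrict)
      ((hγc _).intervalIntegrable _ _)
      ((hd_meas _).restrict)
      (ae_of_all _ fun s _ t _ => hC' _ _)
      (intervalIntegrable_const)
      (ae_of_all _ fun s _ t _ => corr_dline γ hγdiff e x₀ s t)
    exact this.2
  have hgbline : ∀ t₀ : ℝ, HasDerivAt (fun t : ℝ => ∫ u in (0:ℝ)..1, γ (x₀ + t • e) u)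
      (∫ u in (0:ℝ)..1, d (x₀ + t₀ • e) u) t₀ := fun t₀ => key 1 t₀
  -- step 3 : moving endpoint
  set p : ℝ → EuclideanSpace ℝ (Fin n) :=
    fun t => ∫ s in c..(c + N * t), (γ x₀ s - ∫ u in (0:ℝ)..1, γ x₀ u) with hp_def
  set G : ℝ → EuclideanSpace ℝ (Fin n) :=
    fun t => ∫ s in c..(c + N * t),
      (γ (x₀ + t • e) s - ∫ u in (0:ℝ)..1, γ (x₀ + t • e) u) with hG_def
  have hgc : ∀ y : Fin m → ℝ,
      Continuous fun s => γ y s - ∫ u in (0:ℝ)..1, γ y u := fun y =>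
    (hγc y).sub continuous_const
  have hp : HasDerivAt p (N • (γ x₀ c - ∫ u in (0:ℝ)..1, γ x₀ u)) 0 := by
    have hPd : HasDerivAt (fun y => ∫ s in c..y, (γ x₀ s - ∫ u in (0:ℝ)..1, γ x₀ u))
        (γ x₀ c - ∫ u in (0:ℝ)..1, γ x₀ u) c :=
      intervalIntegral.integral_hasDerivAt_right ((hgc x₀).intervalIntegrable _ _)
        ((hgc x₀).stronglyMeasurableAtFilter _ _) (hgc x₀).continuousAt
    have hin : HasDerivAt (fun t : ℝ => c + N * t) N 0 := by
      simpa using ((hasDerivAt_id (0:ℝ)).const_mul N).const_add c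
    have hc0 : c + N * 0 = c := by ring
    rw [← hc0] at hPd
    have := hPd.scomp 0 hin
    simpa [hp_def, Function.comp_def] using this
  have hq : HasDerivAt (fun t => G t - p t) 0 0 := by
    rw [hasDerivAt_iff_isLittleO]
    have h00 : G 0 - p 0 = 0 := by
      simp [hG_def, hp_def, intervalIntegral.integral_same]
    have hqb : ∀ t : ℝ, ‖G t - p t‖ ≤ ((C + C) * |N|) * ‖t * t‖ := by
      intro t
      have heq : G t - p t = ∫ s in c..(c + N * t),
          ((γ (x₀ + t • e) s - ∫ u in (0:ℝ)..1, γ (x₀ + t • e) u)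
            - (γ x₀ s - ∫ u in (0:ℝ)..1, γ x₀ u)) := by
        rw [intervalIntegral.integral_sub ((hgc _).intervalIntegrable _ _)
          ((hgc _).intervalIntegrable _ _)]
      rw [heq]
      have hbd : ∀ s ∈ Set.uIoc c (c + N * t),
          ‖(γ (x₀ + t • e) s - ∫ u in (0:ℝ)..1, γ (x₀ + t • e) u)
            - (γ x₀ s - ∫ u in (0:ℝ)..1, γ x₀ u)‖ ≤ (C + C) * |t| := by
        intro s _
        rw [sub_sub_sub_comm]
        calc ‖(γ (x₀ + t • e) s - γ x₀ s) -
              ((∫ u in (0:ℝ)..1, γ (x₀ + t • e) u) - ∫ u in (0:ℝ)..1, γ x₀ u)‖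
            ≤ ‖γ (x₀ + t • e) s - γ x₀ s‖ +
              ‖(∫ u in (0:ℝ)..1, γ (x₀ + t • e) u) - ∫ u in (0:ℝ)..1, γ x₀ u‖ :=
              norm_sub_le _ _
          _ ≤ C * |t| + C * |t| := add_le_add (hlipγ x₀ s t) (hlipgb t)
          _ = (C + C) * |t| := by ring
      calc ‖∫ s in c..(c + N * t), _‖ ≤ ((C + C) * |t|) * |c + N * t - c| :=
            intervalIntegral.norm_integral_le_of_norm_le_const hbd
        _ = ((C + C) * |N|) * ‖t * t‖ := by
            rw [show c + N * t - c = N * t by ring, abs_mul, Real.norm_eq_abs, abs_mul]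
            ring
    have : (fun t : ℝ => G t - p t) =O[nhds 0] fun t => t * t :=
      Asymptotics.IsBigO.of_bound _ (.of_forall fun t => by
        simpa using hqb t)
    have hlit : (fun t : ℝ => t * t) =o[nhds 0] fun t : ℝ => t := by
      rw [Asymptotics.isLittleO_iff]
      intro ε hε
      rw [Metric.eventually_nhds_iff]
      refine ⟨ε, hε, fun {t} ht => ?_⟩
      rw [Real.dist_eq, sub_zero] at ht
      simp only [Real.norm_eq_abs, abs_mul]
      nlinarith [abs_nonneg t]
    have main := this.trans_isLittleO hlit
    simpa [h00] using main
  have hGd : HasDerivAt G (N • (γ x₀ c - ∫ u in (0:ℝ)..1, γ x₀ u)) 0 := by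
    have := hp.add hq
    simpa [Pi.add_def] using this
  -- rewrite f₁ along the line
  have hj : ∀ t : ℝ, N * ((x₀ + t • e) j) = c + N * t := by
    intro t
    have : (x₀ + t • e) j = x₀ j + t := by simp [he, Pi.single_eq_same]
    rw [this, hc]; ring
  have hΦeq : (fun t : ℝ => f₁ (x₀ + t • e)) = fun t =>
      f₀ (x₀ + t • e) + (1 / N) • ((∫ s in (0:ℝ)..c, γ (x₀ + t • e) s)
        - c • (∫ u in (0:ℝ)..1, γ (x₀ + t • e) u) + G t) := by
    funext t
    rw [hf₁ (x₀ + t • e), hj t]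
    congr 1
    rw [hG_def]
    rw [← intervalIntegral.integral_add_adjacent_intervals (a := (0:ℝ)) (b := c)
      (c := c + N * t) ((hgc _).intervalIntegrable _ _) ((hgc _).intervalIntegrable _ _)]
    congr 1
    rw [intervalIntegral.integral_sub ((hγc _).intervalIntegrable _ _)
      intervalIntegrable_const, intervalIntegral.integral_const]
    simp
  have hT2 : HasDerivAt (fun t : ℝ => ∫ s in (0:ℝ)..c, γ (x₀ + t • e) s)
      (∫ s in (0:ℝ)..c, d x₀ s) 0 := by
    have := key c 0; rwa [hzero] at this
  have hT3 : HasDerivAt (fun t : ℝ => c • ∫ u in (0:ℝ)..1, γ (x₀ + t • e) u)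
      (c • ∫ u in (0:ℝ)..1, d x₀ u) 0 := by
    have := (hgbline 0).const_smul c; rwa [hzero] at this
  have hT1 : HasDerivAt (fun t : ℝ => f₀ (x₀ + t • e)) (∫ u in (0:ℝ)..1, γ x₀ u) 0 := by
    have := ((hf₀.differentiable (by norm_num) (x₀ + (0:ℝ) • e)).hasFDerivAt).comp_hasDerivAt
      0 (corr_line_hasDerivAt e x₀ 0)
    rw [hzero] at this
    rwa [hAC x₀] at this
  have hΦd : HasDerivAt (fun t : ℝ => f₁ (x₀ + t • e))
      ((∫ u in (0:ℝ)..1, γ x₀ u) + (1 / N) • ((∫ s in (0:ℝ)..c, d x₀ s)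
        - c • (∫ u in (0:ℝ)..1, d x₀ u) + N • (γ x₀ c - ∫ u in (0:ℝ)..1, γ x₀ u))) 0 := by
    rw [hΦeq]
    exact hT1.add (((hT2.sub hT3).add hGd).const_smul (1 / N))
  have hΦd2 : HasDerivAt (fun t : ℝ => f₁ (x₀ + t • e)) (fderiv ℝ f₁ x₀ e) 0 := by
    have := ((hf₁diff (x₀ + (0:ℝ) • e)).hasFDerivAt).comp_hasDerivAt
      0 (corr_line_hasDerivAt e x₀ 0)
    rwa [hzero] at this
  have hfd := hΦd2.unique hΦd
  have hV : fderiv ℝ f₁ x₀ e - γ x₀ c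
      = (1 / N) • ((∫ s in (0:ℝ)..c, d x₀ s) - c • ∫ u in (0:ℝ)..1, d x₀ u) := by
    rw [hfd, smul_add, smul_smul, one_div, inv_mul_cancel₀ hN.ne', one_smul]
    abel
  -- the periodicity bound
  have hdper : ∀ s : ℝ, d x₀ (s + 1) = d x₀ s := by
    intro s
    have hfun : (fun x => γ x (s + 1)) = fun x => γ x s := funext fun x => hper x s
    simp only [hd_def]
    rw [hfun]
  have hint' : ∀ a b : ℝ, IntervalIntegrable
      (fun s => d x₀ s - ∫ u in (0:ℝ)..1, d x₀ u) volume a b :=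
    fun a b => (hd_int x₀ a b).sub intervalIntegrable_const
  have hper1 : Function.Periodic (fun s => d x₀ s - ∫ u in (0:ℝ)..1, d x₀ u) 1 := by
    intro s
    simp only [hdper s]
  have h01 : (∫ s in (0:ℝ)..1, (d x₀ s - ∫ u in (0:ℝ)..1, d x₀ u)) = 0 := by
    rw [intervalIntegral.integral_sub (hd_int x₀ 0 1) intervalIntegrable_const,
      intervalIntegral.integral_const]
    simp
  have hflr := hper1.intervalIntegral_add_zsmul_eq ⌊c⌋ 0 hint'
  have hint0k : (∫ s in (0:ℝ)..(⌊c⌋:ℝ), (d x₀ s - ∫ u in (0:ℝ)..1, d x₀ u)) = 0 := by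
    simp only [zero_add] at hflr
    rw [h01, smul_zero] at hflr
    simpa using hflr
  have hsplit : (∫ s in (0:ℝ)..c, (d x₀ s - ∫ u in (0:ℝ)..1, d x₀ u))
      = ∫ s in ((⌊c⌋:ℝ))..c, (d x₀ s - ∫ u in (0:ℝ)..1, d x₀ u) := by
    rw [← intervalIntegral.integral_add_adjacent_intervals (hint' 0 (⌊c⌋:ℝ)) (hint' (⌊c⌋:ℝ) c),
      hint0k, zero_add]
  have hnorm2 : ‖∫ s in ((⌊c⌋:ℝ))..c, (d x₀ s - ∫ u in (0:ℝ)..1, d x₀ u)‖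
      ≤ (C + C) * |c - (⌊c⌋:ℝ)| := by
    apply intervalIntegral.norm_integral_le_of_norm_le_const
    intro s _
    calc ‖d x₀ s - ∫ u in (0:ℝ)..1, d x₀ u‖
        ≤ ‖d x₀ s‖ + ‖∫ u in (0:ℝ)..1, d x₀ u‖ := norm_sub_le _ _
      _ ≤ C + C := add_le_add (hC' x₀ s) (hdbar_norm x₀)
  have hfrac : |c - (⌊c⌋:ℝ)| ≤ 1 := by
    rw [abs_of_nonneg (sub_nonneg.2 (Int.floor_le c))]
    have := Int.sub_one_lt_floor c
    linarith
  have hVb : ‖(∫ s in (0:ℝ)..c, d x₀ s) - c • ∫ u in (0:ℝ)..1, d x₀ u‖ ≤ C + C := by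
    have heqV : (∫ s in (0:ℝ)..c, d x₀ s) - c • (∫ u in (0:ℝ)..1, d x₀ u)
        = ∫ s in (0:ℝ)..c, (d x₀ s - ∫ u in (0:ℝ)..1, d x₀ u) := by
      rw [intervalIntegral.integral_sub (hd_int x₀ 0 c) intervalIntegrable_const,
        intervalIntegral.integral_const]
      simp
    rw [heqV, hsplit]
    calc ‖∫ s in ((⌊c⌋:ℝ))..c, (d x₀ s - ∫ u in (0:ℝ)..1, d x₀ u)‖
        ≤ (C + C) * |c - (⌊c⌋:ℝ)| := hnorm2
      _ ≤ (C + C) * 1 := mul_le_mul_of_nonneg_left hfrac (by linarith)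
      _ = C + C := mul_one _
  rw [hV, norm_smul, Real.norm_eq_abs, abs_of_pos (by positivity : (0:ℝ) < 1 / N)]
  calc (1 / N) * ‖(∫ s in (0:ℝ)..c, d x₀ s) - c • ∫ u in (0:ℝ)..1, d x₀ u‖
      ≤ (1 / N) * (C + C) := mul_le_mul_of_nonneg_left hVb (by positivity)
    _ = 2 * C / N := by ring
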